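/- Let V ≥ 0 be a random variable with cumulative distribution function F(h) = P(V ≤ h), and assume F is regularly varying at 0 with index D (a positive integer) and F(h) > 0 for h > 0. Let K:[0,1]→[0,∞) be of class C¹, extended by 0 outside [0,1]. Let h_n ↓ 0. Then E[K(V/h_n)] / F(h_n) → D ∫₀¹ s^{D−1} K(s) ds as n → ∞. -/

import Mathlib

open Set Filter MeasureTheory intervalIntegral

/-- Lemma L1 of the paper in abstract form. If `F`, the cdf of the
nonnegative random variable `V`, is regularly varying at `0` with index `D` and
positive on `(0,∞)`, `K` is `C¹` on `[0,1]`, nonnegative, and vanishes beyond `1`,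
and `h_n ↓ 0`, then `E[K(V/h_n)]/F(h_n) → D ∫₀¹ s^{D−1} K(s) ds`. -/
theorem pca_kernel_expectation_asymptotics
    {Ω : Type*} [MeasurableSpace Ω] (μ : Measure Ω) [IsProbabilityMeasure μ]
    (V : Ω → ℝ) (hV : Measurable V) (hVnonneg : ∀ ω, 0 ≤ V ω)
    (D : ℕ) (hD : 0 < D)
    (F : ℝ → ℝ) (hF : ∀ h : ℝ, F h = (μ {ω | V ω ≤ h}).toReal)
    (hFpos : ∀ h : ℝ, 0 < h → 0 < F h)
    (hRV : ∀ u : ℝ, 0 < u →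
      Tendsto (fun s : ℝ => F (s * u) / F s) (nhdsWithin 0 (Set.Ioi 0)) (nhds ((u : ℝ) ^ D)))
    (K K' : ℝ → ℝ)
    (hderiv : ∀ s ∈ Set.Icc (0:ℝ) 1, HasDerivWithinAt K (K' s) (Set.Icc 0 1) s)
    (hK'cont : ContinuousOn K' (Set.Icc 0 1))
    (hKnonneg : ∀ s ∈ Set.Icc (0:ℝ) 1, 0 ≤ K s)
    (hKzero : ∀ v : ℝ, 1 < v → K v = 0)
    (h : ℕ → ℝ) (hhpos : ∀ n, 0 < h n) (hhanti : Antitone h)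
    (hhlim : Tendsto h atTop (nhds 0)) :
    Tendsto (fun n => (∫ ω, K (V ω / h n) ∂μ) / F (h n)) atTop
      (nhds ((D : ℝ) * ∫ s in (0:ℝ)..1, s ^ (D - 1) * K s)) := by
  -- a globally continuous extension of `K'`
  set Kc : ℝ → ℝ := fun t => K' (max 0 (min 1 t)) with hKcdef
  have hclamp : ∀ t : ℝ, max 0 (min 1 t) ∈ Icc (0:ℝ) 1 :=
    fun t => ⟨le_max_left _ _, max_le zero_le_one (min_le_left _ _)⟩
  have hKc_cont : Continuous Kc := by
    apply hK'cont.comp_continuous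
    · exact continuous_const.max (continuous_const.min continuous_id)
    · exact hclamp
  have hKc_eq : ∀ t ∈ Icc (0:ℝ) 1, Kc t = K' t := by
    intro t ht
    simp only [hKcdef]
    rw [min_eq_right ht.2, max_eq_right ht.1]
  have hKcont : ContinuousOn K (Icc (0:ℝ) 1) :=
    fun x hx => (hderiv x hx).continuousWithinAt
  obtain ⟨C, hC⟩ := isCompact_Icc.exists_bound_of_continuousOn hK'cont
  have hCb : ∀ t : ℝ, |Kc t| ≤ C := fun t => hC _ (hclamp t)
  have Fnonneg : ∀ t : ℝ, 0 ≤ F t := by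
    intro t; rw [hF]; exact ENNReal.toReal_nonneg
  have Fmono : Monotone F := by
    intro a b hab
    rw [hF, hF]
    exact ENNReal.toReal_mono (measure_ne_top μ _)
      (measure_mono fun ω hω => le_trans hω hab)
  have hFmeas : Measurable F := Fmono.measurable
  have hKderivAt : ∀ x ∈ Ioo (0:ℝ) 1, HasDerivAt K (K' x) x := fun x hx =>
    (hderiv x (Ioo_subset_Icc_self hx)).hasDerivAt (Icc_mem_nhds hx.1 hx.2)
  -- fundamental theorem of calculus on `[a,1]`
  have ftc : ∀ a ∈ Icc (0:ℝ) 1, ∫ s in a..1, Kc s = K 1 - K a := by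
    intro a ha
    apply intervalIntegral.integral_eq_sub_of_hasDeriv_right_of_le ha.2
      (hKcont.mono (Icc_subset_Icc ha.1 le_rfl))
    · intro x hx
      have hx' : x ∈ Ioo (0:ℝ) 1 := ⟨lt_of_le_of_lt ha.1 hx.1, hx.2⟩
      rw [hKc_eq x (Ioo_subset_Icc_self hx')]
      exact (hKderivAt x hx').hasDerivWithinAt
    · exact hKc_cont.intervalIntegrable _ _
  set ν : Measure ℝ := volume.restrict (Ioc (0:ℝ) 1) with hνdef
  haveI : IsFiniteMeasure ν := by
    constructor
    rw [hνdef, Measure.restrict_apply_univ, Real.volume_Ioc]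
    simp
  -- key identity for E[K(V/h n)]
  have key : ∀ n, (∫ ω, K (V ω / h n) ∂μ)
      = K 1 * F (h n) - ∫ s in Ioc (0:ℝ) 1, Kc s * F (h n * s) := by
    intro n
    have h0pos := hhpos n
    set h0 := h n with hh0
    set f : Ω × ℝ → ℝ := fun p => if V p.1 ≤ h0 * p.2 then Kc p.2 else 0 with hfdef
    have hVset : ∀ c : ℝ, MeasurableSet {ω | V ω ≤ c} := fun c =>
      measurableSet_le hV measurable_const
    have hfmeas : Measurable f := by
      apply Measurable.ite _ (hKc_cont.measurable.comp measurable_snd) measurable_const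
      exact measurableSet_le (hV.comp measurable_fst) (measurable_const.mul measurable_snd)
    have hfint : Integrable f (μ.prod ν) := by
      apply (integrable_const C).mono' hfmeas.aestronglyMeasurable
      apply Eventually.of_forall
      intro p
      simp only [hfdef]
      split
      · exact hCb _
      · simp only [norm_zero]
        exact le_trans (abs_nonneg (Kc 0)) (hCb 0)
    have pointwise : ∀ ω, K (V ω / h0)
        = Set.indicator {ω' | V ω' ≤ h0} (fun _ => K 1) ω - ∫ s, f (ω, s) ∂ν := by
      intro ω
      by_cases hVω : V ω ≤ h0
      · rw [Set.indicator_of_mem (show ω ∈ {ω' | V ω' ≤ h0} from hVω)]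
        set a := V ω / h0 with hadef
        have ha : a ∈ Icc (0:ℝ) 1 :=
          ⟨div_nonneg (hVnonneg ω) h0pos.le, (div_le_one h0pos).2 hVω⟩
        have hcond : ∀ s : ℝ, (V ω ≤ h0 * s) ↔ a ≤ s := by
          intro s
          rw [hadef, div_le_iff₀ h0pos, mul_comm]
        have hfun : (fun s => f (ω, s)) = Set.indicator (Ici a) Kc := by
          funext s
          simp only [hfdef, Set.indicator_apply, mem_Ici, hcond s]
        rw [hfun, MeasureTheory.integral_indicator measurableSet_Ici, hνdef,
          Measure.restrict_restrict measurableSet_Ici]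
        have hset : (Ici a ∩ Ioc (0:ℝ) 1 : Set ℝ) =ᵐ[volume] Ioc a 1 := by
          rw [MeasureTheory.ae_eq_set]
          constructor
          · apply measure_mono_null (t := {a}) ?_ (measure_singleton a)
            intro s hs
            simp only [mem_inter_iff, mem_Ici, mem_Ioc, mem_diff, mem_singleton_iff] at *
            rcases hs with ⟨⟨h1, h2, h3⟩, h4⟩
            by_contra hne
            exact h4 ⟨lt_of_le_of_ne h1 (Ne.symm hne), h3⟩
          · apply measure_mono_null (t := (∅ : Set ℝ)) ?_ measure_empty
            intro s hs
            exact absurd (Set.mem_inter hs.1.1.le (Set.mem_Ioc.2 ⟨lt_of_le_of_lt ha.1 hs.1.1, hs.1.2⟩)) hs.2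
        rw [setIntegral_congr_set hset, ← intervalIntegral.integral_of_le ha.2, ftc a ha]
        ring
      · rw [Set.indicator_of_notMem (show ω ∉ {ω' | V ω' ≤ h0} from hVω)]
        push_neg at hVω
        have hz : ∫ s, f (ω, s) ∂ν = 0 := by
          rw [hνdef]
          apply setIntegral_eq_zero_of_forall_eq_zero
          intro s hs
          simp only [hfdef]
          rw [if_neg]
          push_neg
          nlinarith [hs.1, hs.2]
        rw [hz, hKzero _ ((one_lt_div h0pos).2 hVω)]
        ring
    have hIndInt : Integrable (Set.indicator {ω' | V ω' ≤ h0} (fun _ => K 1)) μ :=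
      (integrable_const (K 1)).indicator (hVset h0)
    have hInnerInt : Integrable (fun ω => ∫ s, f (ω, s) ∂ν) μ :=
      hfint.integral_prod_left
    calc ∫ ω, K (V ω / h0) ∂μ
        = ∫ ω, (Set.indicator {ω' | V ω' ≤ h0} (fun _ => K 1) ω - ∫ s, f (ω, s) ∂ν) ∂μ :=
          integral_congr_ae (Eventually.of_forall pointwise)
      _ = (∫ ω, Set.indicator {ω' | V ω' ≤ h0} (fun _ => K 1) ω ∂μ)
            - ∫ ω, ∫ s, f (ω, s) ∂ν ∂μ := integral_sub hIndInt hInnerInt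
      _ = K 1 * F h0 - ∫ s, ∫ ω, f (ω, s) ∂μ ∂ν := by
          rw [MeasureTheory.integral_indicator_const (K 1) (hVset h0),
            MeasureTheory.integral_integral_swap hfint, hF, smul_eq_mul, mul_comm, Measure.real]
      _ = K 1 * F h0 - ∫ s in Ioc (0:ℝ) 1, Kc s * F (h0 * s) := by
          rw [hνdef]
          congr 1
          apply MeasureTheory.integral_congr_ae (Eventually.of_forall ?_)
          intro s
          have : (fun ω => f (ω, s)) = Set.indicator {ω | V ω ≤ h0 * s} (fun _ => Kc s) := by
            funext ω
            simp only [hfdef, Set.indicator_apply, mem_setOf_eq]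
          rw [this, MeasureTheory.integral_indicator_const (Kc s) (hVset (h0 * s)), hF, smul_eq_mul,
            mul_comm, Measure.real]
  -- divided form
  have main_eq : ∀ n, (∫ ω, K (V ω / h n) ∂μ) / F (h n)
      = K 1 - ∫ s in Ioc (0:ℝ) 1, Kc s * (F (h n * s) / F (h n)) := by
    intro n
    have hFn := (hFpos _ (hhpos n)).ne'
    rw [key n, sub_div, mul_div_assoc, div_self hFn, mul_one]
    congr 1
    rw [← MeasureTheory.integral_div]
    apply MeasureTheory.integral_congr_ae (Eventually.of_forall ?_)
    intro s
    rw [mul_div_assoc]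
  -- convergence of h into nhdsWithin 0 (Ioi 0)
  have htend : Tendsto h atTop (nhdsWithin 0 (Ioi 0)) :=
    tendsto_nhdsWithin_iff.2 ⟨hhlim, Eventually.of_forall fun n => hhpos n⟩
  -- dominated convergence
  have hlim1 : Tendsto (fun n => ∫ s in Ioc (0:ℝ) 1, Kc s * (F (h n * s) / F (h n)))
      atTop (nhds (∫ s in Ioc (0:ℝ) 1, Kc s * s ^ D)) := by
    apply MeasureTheory.tendsto_integral_of_dominated_convergence (fun _ => C)
    · intro n
      exact (hKc_cont.measurable.mul
        ((hFmeas.comp (measurable_id.const_mul (h n))).div_const (F (h n)))).aestronglyMeasurable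
    · exact integrable_const C
    · intro n
      filter_upwards [ae_restrict_mem measurableSet_Ioc] with s hs
      have h1 : F (h n * s) ≤ F (h n) := Fmono (by nlinarith [hs.2, hhpos n])
      have h2 : 0 ≤ F (h n * s) / F (h n) :=
        div_nonneg (Fnonneg _) (Fnonneg _)
      have h3 : F (h n * s) / F (h n) ≤ 1 := (div_le_one (hFpos _ (hhpos n))).2 h1
      calc ‖Kc s * (F (h n * s) / F (h n))‖
          = |Kc s| * |F (h n * s) / F (h n)| := abs_mul _ _
        _ ≤ C * 1 := by
            apply mul_le_mul (hCb s) _ (abs_nonneg _) (le_trans (abs_nonneg (Kc 0)) (hCb 0))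
            rw [abs_of_nonneg h2]; exact h3
        _ = C := mul_one C
    · filter_upwards [ae_restrict_mem measurableSet_Ioc] with s hs
      exact Tendsto.const_mul (Kc s) ((hRV s hs.1).comp htend)
  -- integration by parts
  have hcont1 : ContinuousOn (fun s : ℝ => (D:ℝ) * s ^ (D - 1) * K s) (Icc (0:ℝ) 1) :=
    ((continuous_const.mul (continuous_pow (D - 1))).continuousOn).mul hKcont
  have hcont2 : ContinuousOn (fun s : ℝ => s ^ D * Kc s) (Icc (0:ℝ) 1) :=
    ((continuous_pow D).continuousOn).mul hKc_cont.continuousOn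
  have hint1 : IntervalIntegrable (fun s : ℝ => (D:ℝ) * s ^ (D - 1) * K s) volume 0 1 :=
    (hcont1.mono (by rw [uIcc_of_le zero_le_one])).intervalIntegrable
  have hint2 : IntervalIntegrable (fun s : ℝ => s ^ D * Kc s) volume 0 1 :=
    (hcont2.mono (by rw [uIcc_of_le zero_le_one])).intervalIntegrable
  have hparts : ∫ s in (0:ℝ)..1, ((D:ℝ) * s ^ (D - 1) * K s + s ^ D * Kc s) = K 1 := by
    have := intervalIntegral.integral_eq_sub_of_hasDeriv_right_of_le zero_le_one
      (f := fun s : ℝ => s ^ D * K s)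
      (f' := fun s : ℝ => (D:ℝ) * s ^ (D - 1) * K s + s ^ D * Kc s)
      (((continuous_pow D).continuousOn).mul hKcont) ?_ (hint1.add hint2)
    · rw [this]
      simp [zero_pow hD.ne']
    · intro x hx
      have hK := hKderivAt x hx
      have hG : HasDerivAt (fun y : ℝ => y ^ D * K y)
          ((D:ℝ) * x ^ (D - 1) * K x + x ^ D * Kc x) x := by
        rw [hKc_eq x (Ioo_subset_Icc_self hx)]
        exact (hasDerivAt_pow D x).mul hK
      exact hG.hasDerivWithinAt
  have hsplit : (D:ℝ) * (∫ s in (0:ℝ)..1, s ^ (D - 1) * K s)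
      + ∫ s in (0:ℝ)..1, s ^ D * Kc s = K 1 := by
    have hmul : ∫ s in (0:ℝ)..1, (D:ℝ) * s ^ (D - 1) * K s
        = (D:ℝ) * ∫ s in (0:ℝ)..1, s ^ (D - 1) * K s := by
      rw [← intervalIntegral.integral_const_mul]
      apply intervalIntegral.integral_congr
      intro s _
      ring
    rw [← hmul, ← intervalIntegral.integral_add hint1 hint2]
    exact hparts
  have hconv : ∫ s in (0:ℝ)..1, s ^ D * Kc s = ∫ s in Ioc (0:ℝ) 1, Kc s * s ^ D := by
    rw [intervalIntegral.integral_of_le zero_le_one]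
    apply MeasureTheory.integral_congr_ae (Eventually.of_forall ?_)
    intro s
    exact mul_comm _ _
  have final : K 1 - ∫ s in Ioc (0:ℝ) 1, Kc s * s ^ D
      = (D:ℝ) * ∫ s in (0:ℝ)..1, s ^ (D - 1) * K s := by
    rw [← hconv]; linarith [hsplit]
  have := (tendsto_const_nhds (x := K 1)).sub hlim1
  rw [final] at this
  exact this.congr fun n => (main_eq n).symm
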